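/- Let v : (0,∞) → ℝ satisfy the radial system with u, and let F₂(r) = ∫₀^r t e^{u(t)}(e^{v(t)}-1) dt. Suppose v(r) < 0 for all r > 0. Then a contradiction follows; i.e., every solution v of the system -(rv')' = r e^u(e^v-1) with v(r) - 2N₂ ln r bounded near 0 must vanish at some r₀ > 0. -/

import Mathlib

open MeasureTheory Real

theorem stmt9 (N₁ N₂ : ℕ) (hN₂ : 1 ≤ N₂) (u v : ℝ → ℝ)
    (hu : ContDiffOn ℝ 2 u (Set.Ioi 0)) (hv : ContDiffOn ℝ 2 v (Set.Ioi 0))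
    (hODEu : ∀ r > (0 : ℝ),
      deriv (fun s => s * deriv u s) r = -(r * Real.exp (v r) * (Real.exp (u r) + 1)))
    (hODEv : ∀ r > (0 : ℝ),
      deriv (fun s => s * deriv v s) r = -(r * Real.exp (u r) * (Real.exp (v r) - 1)))
    (hu0 : ∃ C ε, 0 < ε ∧ ∀ r ∈ Set.Ioo (0 : ℝ) ε, |u r - 2 * N₁ * Real.log r| ≤ C)
    (hv0 : ∃ C ε, 0 < ε ∧ ∀ r ∈ Set.Ioo (0 : ℝ) ε, |v r - 2 * N₂ * Real.log r| ≤ C) :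
    ∃ r₀ > (0 : ℝ), v r₀ = 0 := by
  by_contra hcon
  push_neg at hcon
  obtain ⟨C, ε, hε, hC⟩ := hv0
  have hN₂' : (1 : ℝ) ≤ (N₂ : ℝ) := by exact_mod_cast hN₂
  have h2N : (0 : ℝ) < 2 * (N₂ : ℝ) := by linarith
  have hvdiff : ∀ r > (0 : ℝ), DifferentiableAt ℝ v r := fun r hr =>
    (hv.differentiableOn (by norm_num)).differentiableAt (isOpen_Ioi.mem_nhds hr)
  have hvcont : ContinuousOn v (Set.Ioi 0) := fun r hr =>
    ((hvdiff r hr).continuousAt).continuousWithinAt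
  -- we can make v as small as we like near 0
  have hsmall : ∀ T δ : ℝ, 0 < δ → ∃ r, 0 < r ∧ r < δ ∧ v r < T := by
    intro T δ hδ
    refine ⟨min (min (δ/2) (ε/2)) (Real.exp ((T - C - 1)/(2*(N₂:ℝ)))), ?_, ?_, ?_⟩
    · exact lt_min (lt_min (by linarith) (by linarith)) (Real.exp_pos _)
    · exact lt_of_le_of_lt (le_trans (min_le_left _ _) (min_le_left _ _)) (by linarith)
    · set r := min (min (δ/2) (ε/2)) (Real.exp ((T - C - 1)/(2*(N₂:ℝ)))) with hrdef
      have hr0 : 0 < r := lt_min (lt_min (by linarith) (by linarith)) (Real.exp_pos _)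
      have hrε : r ∈ Set.Ioo (0:ℝ) ε :=
        ⟨hr0, lt_of_le_of_lt (le_trans (min_le_left _ _) (min_le_right _ _)) (by linarith)⟩
      have hb := abs_le.mp (hC r hrε)
      have hlog : Real.log r ≤ (T - C - 1)/(2*(N₂:ℝ)) := by
        have h1 : Real.log r ≤ Real.log (Real.exp ((T - C - 1)/(2*(N₂:ℝ)))) :=
          Real.log_le_log hr0 (min_le_right _ _)
        rwa [Real.log_exp] at h1
      have h2 : 2 * (N₂:ℝ) * Real.log r ≤ T - C - 1 := by
        have := mul_le_mul_of_nonneg_left hlog h2N.le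
        rwa [mul_div_cancel₀ _ h2N.ne'] at this
      linarith [hb.2]
  -- v is negative everywhere
  have hneg : ∀ r > (0 : ℝ), v r < 0 := by
    intro r hr
    rcases lt_or_gt_of_ne (hcon r hr) with h | h
    · exact h
    · exfalso
      obtain ⟨r₁, hr₁0, hr₁r, hv₁⟩ := hsmall 0 r hr
      have hsub : Set.Icc r₁ r ⊆ Set.Ioi (0:ℝ) := fun x hx => lt_of_lt_of_le hr₁0 hx.1
      have := intermediate_value_Icc hr₁r.le (hvcont.mono hsub)
      have h0 : (0:ℝ) ∈ Set.Icc (v r₁) (v r) := ⟨hv₁.le, h.le⟩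
      obtain ⟨x, hx, hvx⟩ := this h0
      exact hcon x (lt_of_lt_of_le hr₁0 hx.1) hvx
  -- s ↦ s * v'(s) is differentiable on (0, ∞)
  have hgdiff : ∀ r > (0 : ℝ), DifferentiableAt ℝ (fun s => s * deriv v s) r := by
    intro r hr
    by_contra h
    have h0 := deriv_zero_of_not_differentiableAt h
    have hODE := hODEv r hr
    rw [h0] at hODE
    have h1 : Real.exp (v r) < 1 := by
      rw [← Real.exp_zero]; exact Real.exp_lt_exp.mpr (hneg r hr)
    have h2 : -(r * Real.exp (u r) * (Real.exp (v r) - 1))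
        = r * Real.exp (u r) * (1 - Real.exp (v r)) := by ring
    have h3 : 0 < r * Real.exp (u r) * (1 - Real.exp (v r)) :=
      mul_pos (mul_pos hr (Real.exp_pos (u r))) (by linarith)
    rw [← h2, ← hODE] at h3
    exact lt_irrefl 0 h3
  -- s ↦ s * v'(s) is strictly increasing on (0, ∞)
  have hgmono : StrictMonoOn (fun s => s * deriv v s) (Set.Ioi 0) := by
    apply strictMonoOn_of_deriv_pos (convex_Ioi 0)
    · exact fun r hr => ((hgdiff r hr).continuousAt).continuousWithinAt
    · intro r hr
      rw [interior_Ioi] at hr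
      rw [hODEv r hr]
      have h1 : Real.exp (v r) < 1 := by
        rw [← Real.exp_zero]; exact Real.exp_lt_exp.mpr (hneg r hr)
      have h2 : -(r * Real.exp (u r) * (Real.exp (v r) - 1))
          = r * Real.exp (u r) * (1 - Real.exp (v r)) := by ring
      rw [h2]
      exact mul_pos (mul_pos hr (Real.exp_pos (u r))) (by linarith)
  -- there is a point where r * v'(r) > 0
  have hex : ∃ a > (0:ℝ), 0 < a * deriv v a := by
    by_contra hnp
    push_neg at hnp
    have hant : AntitoneOn v (Set.Ioi 0) := by
      apply antitoneOn_of_deriv_nonpos (convex_Ioi 0) hvcont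
      · rw [interior_Ioi]; exact fun r hr => (hvdiff r hr).differentiableWithinAt
      · intro r hr
        rw [interior_Ioi] at hr
        by_contra hpos'
        push_neg at hpos'
        exact absurd (mul_pos hr hpos') (not_lt.mpr (hnp r hr))
    obtain ⟨r₁, h1, h2, h3⟩ := hsmall (v 1) 1 one_pos
    have := hant (Set.mem_Ioi.mpr h1) (Set.mem_Ioi.mpr one_pos) h2.le
    linarith
  obtain ⟨a, ha, hga⟩ := hex
  set ga := a * deriv v a with hga_def
  have hva : v a < 0 := hneg a ha
  -- v r - ga * log r is monotone on [a, ∞)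
  have hφmono : MonotoneOn (fun r => v r - ga * Real.log r) (Set.Ici a) := by
    apply monotoneOn_of_deriv_nonneg (convex_Ici a)
    · intro r hr
      have hr0 : 0 < r := lt_of_lt_of_le ha hr
      exact (((hvdiff r hr0).sub ((differentiableAt_const _).mul
        (Real.differentiableAt_log hr0.ne'))).continuousAt).continuousWithinAt
    · rw [interior_Ici]
      intro r hr
      have hr0 : 0 < r := ha.trans hr
      exact ((hvdiff r hr0).sub ((differentiableAt_const _).mul
        (Real.differentiableAt_log hr0.ne'))).differentiableWithinAt
    · rw [interior_Ici]
      intro r hr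
      have har : a < r := hr
      have hr0 : 0 < r := ha.trans har
      rw [deriv_fun_sub (hvdiff r hr0) ((Real.differentiableAt_log hr0.ne').const_mul ga),
        deriv_const_mul _ (Real.differentiableAt_log hr0.ne'), Real.deriv_log]
      have hgr : ga < r * deriv v r := hgmono (Set.mem_Ioi.mpr ha) (Set.mem_Ioi.mpr hr0) har
      have h1 := mul_lt_mul_of_pos_right hgr (inv_pos.mpr hr0)
      have h2 : r * deriv v r * r⁻¹ = deriv v r := by field_simp
      rw [h2] at h1
      linarith
  set R := a * Real.exp ((1 - v a)/ga) with hRdef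
  have htpos : 0 ≤ (1 - v a)/ga := le_of_lt (div_pos (by linarith) hga)
  have hR : a ≤ R := le_mul_of_one_le_right ha.le (Real.one_le_exp htpos)
  have hmon := hφmono (Set.self_mem_Ici) (Set.mem_Ici.mpr hR) hR
  have hlogR : Real.log R = Real.log a + (1 - v a)/ga := by
    rw [hRdef, Real.log_mul ha.ne' (Real.exp_ne_zero _), Real.log_exp]
  have hvR : v R < 0 := hneg R (lt_of_lt_of_le ha hR)
  have heq : ga * ((1 - v a)/ga) = 1 - v a := by field_simp
  simp only [hlogR] at hmon
  have : v a - ga * Real.log a ≤ v R - ga * Real.log a - ga * ((1 - v a)/ga) := by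
    have : v R - ga * (Real.log a + (1 - v a)/ga)
        = v R - ga * Real.log a - ga * ((1 - v a)/ga) := by ring
    linarith [hmon, this]
  rw [heq] at this
  linarith
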